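/- Let E ⊆ [0,∞) be strongly porous on the right at 0. Then E is completely strongly porous if and only if for every almost decreasing sequence τ̃ = {τₙ} in E∖{0} with τₙ → 0 there exists a sequence h̃ = {hₙ} of positive numbers with hₙ → 0 and λ(E,0,hₙ)/hₙ → p⁺(E,0) such that τ̃ ≍ h̃. -/

import Mathlib

open Filter Set Topology ENNReal

/-- λ(E,0,h): the supremum of lengths of open subintervals of (0,h) disjoint from E. -/
noncomputable def lambda0 (E : Set ℝ) (h : ℝ) : ℝ :=
  sSup {l : ℝ | ∃ a b : ℝ, 0 ≤ a ∧ a ≤ b ∧ b ≤ h ∧ Set.Ioo a b ∩ E = ∅ ∧ l = b - a}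

/-- p⁺(E,0): the right porosity of E at 0. -/
noncomputable def porosity (E : Set ℝ) : ℝ :=
  Filter.limsup (fun h => lambda0 E h / h) (nhdsWithin 0 (Set.Ioi 0))

/-- 0 is an accumulation point of E (E ⊆ [0,∞), relative topology of [0,∞)). -/
def AccZero (E : Set ℝ) : Prop := ∀ ε > 0, ∃ x ∈ E, 0 < x ∧ x < ε

/-- (a,b) is a connected component of the exterior of E in [0,∞):
an open interval in [0,∞) disjoint from E, maximal with this property. -/
def IsCompExt (E : Set ℝ) (a b : ℝ) : Prop :=
  0 ≤ a ∧ a < b ∧ Set.Ioo a b ∩ E = ∅ ∧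
  ∀ c d : ℝ, 0 ≤ c → Set.Ioo a b ⊆ Set.Ioo c d → (c, d) ≠ (a, b) → Set.Ioo c d ∩ E ≠ ∅

/-- Membership in Ĩ_E. -/
def memIE (E : Set ℝ) (A : ℕ → ℝ × ℝ) : Prop :=
  (∀ n, 0 < (A n).1) ∧ (∀ n, IsCompExt E (A n).1 (A n).2) ∧
  Filter.Tendsto (fun n => (A n).1) Filter.atTop (nhds 0) ∧
  Filter.Tendsto (fun n => ((A n).2 - (A n).1) / (A n).2) Filter.atTop (nhds 1)

/-- Almost decreasing sequence: eventually nonincreasing. -/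
def AlmostDecr (τ : ℕ → ℝ) : Prop := ∀ᶠ n in Filter.atTop, τ (n + 1) ≤ τ n

/-- Membership in Ẽ₀^d: almost decreasing sequences in E∖{0} tending to 0. -/
def memE0d (E : Set ℝ) (τ : ℕ → ℝ) : Prop :=
  AlmostDecr τ ∧ Filter.Tendsto τ Filter.atTop (nhds 0) ∧ ∀ n, τ n ∈ E \ {0}

/-- Weak equivalence ≍ of sequences: c₁ aₙ ≤ γₙ ≤ c₂ aₙ for large n. -/
def SeqEquiv (a γ : ℕ → ℝ) : Prop :=
  ∃ c₁ c₂ : ℝ, 0 < c₁ ∧ 0 < c₂ ∧ ∀ᶠ n in Filter.atTop, c₁ * a n ≤ γ n ∧ γ n ≤ c₂ * a n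

/-- E is τ̃-strongly porous. -/
def StronglyPorousWrt (E : Set ℝ) (τ : ℕ → ℝ) : Prop :=
  ∃ A : ℕ → ℝ × ℝ, memIE E A ∧ SeqEquiv (fun n => (A n).1) τ

/-- E is completely strongly porous at 0. -/
def CSP (E : Set ℝ) : Prop := ∀ τ : ℕ → ℝ, memE0d E τ → StronglyPorousWrt E τ

/-- Membership in Ĩ_E^d: first coordinates almost decreasing. -/
def memIEd (E : Set ℝ) (A : ℕ → ℝ × ℝ) : Prop := memIE E A ∧ AlmostDecr (fun n => (A n).1)

/-- Membership in Ĩ_E^{sd}: first coordinates eventually strictly decreasing. -/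
def memIEsd (E : Set ℝ) (A : ℕ → ℝ × ℝ) : Prop :=
  memIE E A ∧ ∀ᶠ n in Filter.atTop, (A (n + 1)).1 < (A n).1

/-- The preorder Ã ⪯ L̃. -/
def Prec (A L : ℕ → ℝ × ℝ) : Prop :=
  ∃ N₁ : ℕ, ∃ f : ℕ → ℕ, ∀ n ≥ N₁, (A n).1 = (L (f n)).1

/-- L̃ is universal: every Ã ∈ Ĩ_E^d satisfies Ã ⪯ L̃. -/
def Universal (E : Set ℝ) (L : ℕ → ℝ × ℝ) : Prop :=
  ∀ A : ℕ → ℝ × ℝ, memIEd E A → Prec A L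

/-- M(L̃) = limsup lₙ/mₙ₊₁ (in [0,∞]). -/
noncomputable def Mq (L : ℕ → ℝ × ℝ) : ℝ≥0∞ :=
  Filter.limsup (fun n => ENNReal.ofReal ((L n).1 / (L (n + 1)).2)) Filter.atTop

/-- C(τ̃) = inf over {(aₙ,bₙ)} ∈ Ĩ_E with τₙ ≤ aₙ eventually of limsup aₙ/τₙ. -/
noncomputable def Cseq (E : Set ℝ) (τ : ℕ → ℝ) : ℝ≥0∞ :=
  ⨅ (A : ℕ → ℝ × ℝ) (_ : memIE E A ∧ ∀ᶠ n in Filter.atTop, τ n ≤ (A n).1),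
    Filter.limsup (fun n => ENNReal.ofReal ((A n).1 / τ n)) Filter.atTop

/-- C_E = sup over τ̃ ∈ Ẽ₀^d of C(τ̃). -/
noncomputable def CE (E : Set ℝ) : ℝ≥0∞ := ⨆ (τ : ℕ → ℝ) (_ : memE0d E τ), Cseq E τ

/-- E is uniformly strongly porous at 0. -/
def USP (E : Set ℝ) : Prop :=
  ∃ c : ℝ, 0 < c ∧ ∀ τ : ℕ → ℝ, memE0d E τ → ∃ A : ℕ → ℝ × ℝ, memIE E A ∧
    (∀ᶠ n in Filter.atTop, τ n ≤ (A n).1) ∧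
    Filter.limsup (fun n => ENNReal.ofReal ((A n).1 / τ n)) Filter.atTop ≤ ENNReal.ofReal c

section Helpers

variable {E : Set ℝ}

lemma tau_pos (hE : E ⊆ Set.Ici 0) {τ : ℕ → ℝ} (hτ : memE0d E τ) (n : ℕ) : 0 < τ n := by
  have h := hτ.2.2 n
  have hne : τ n ≠ 0 := by simpa using h.2
  exact lt_of_le_of_ne (hE h.1) (Ne.symm hne)

lemma left_acc {a b : ℝ} (h : IsCompExt E a b) {z : ℝ} (hz : 0 ≤ z) (hza : z < a) :
    (E ∩ Set.Ioc z a).Nonempty := by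
  obtain ⟨ha0, hab, hfree, hmax⟩ := h
  have hne : Set.Ioo z b ∩ E ≠ ∅ := hmax z b hz (Set.Ioo_subset_Ioo hza.le le_rfl)
    (by intro hpq; exact hza.ne (congrArg Prod.fst hpq))
  obtain ⟨e, he⟩ := Set.nonempty_iff_ne_empty.2 hne
  have heE : e ∈ E := he.2
  have hea : e ≤ a := by
    by_contra hc
    push_neg at hc
    exact (Set.eq_empty_iff_forall_notMem.1 hfree e) ⟨⟨hc, he.1.2⟩, heE⟩
  exact ⟨e, heE, he.1.1, hea⟩

lemma comp_make (hE : E ⊆ Set.Ici 0) {u v : ℝ} (hu : 0 ≤ u) (huv : u < v)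
    (hfree : Set.Ioo u v ∩ E = ∅) (hne : (E ∩ Set.Ici v).Nonempty) :
    ∃ a b : ℝ, IsCompExt E a b ∧ a ≤ u ∧ v ≤ b ∧
      sSup ((insert 0 E) ∩ Set.Iic u) = a := by
  set S := (insert 0 E) ∩ Set.Iic u with hS
  have hSne : S.Nonempty := ⟨0, Set.mem_insert _ _, hu⟩
  have hSbdd : BddAbove S := ⟨u, fun x hx => hx.2⟩
  set a := sSup S with ha_def
  have ha_le : a ≤ u := csSup_le hSne (fun x hx => hx.2)
  have ha0 : (0:ℝ) ≤ a := le_csSup hSbdd ⟨Set.mem_insert _ _, hu⟩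
  set T := E ∩ Set.Ici v with hT
  have hTbdd : BddBelow T := ⟨v, fun x hx => hx.2⟩
  set b := sInf T with hb_def
  have hb_ge : v ≤ b := le_csInf hne (fun x hx => hx.2)
  have hab : a < b := lt_of_le_of_lt ha_le (lt_of_lt_of_le huv hb_ge)
  have hfree2 : Set.Ioo a b ∩ E = ∅ := by
    rw [Set.eq_empty_iff_forall_notMem]
    rintro e ⟨⟨hae, heb⟩, heE⟩
    rcases le_or_gt e u with h1 | h1
    · exact absurd (le_csSup hSbdd ⟨Set.mem_insert_of_mem _ heE, h1⟩) (not_le.2 hae)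
    · rcases lt_or_ge e v with h2 | h2
      · exact (Set.eq_empty_iff_forall_notMem.1 hfree e) ⟨⟨h1, h2⟩, heE⟩
      · exact absurd (csInf_le hTbdd ⟨heE, h2⟩) (not_le.2 heb)
  refine ⟨a, b, ⟨ha0, hab, hfree2, ?_⟩, ha_le, hb_ge, rfl⟩
  intro c d hc hsub hne'
  obtain ⟨hca, hbd⟩ := (Set.Ioo_subset_Ioo_iff hab).1 hsub
  rw [← Set.nonempty_iff_ne_empty]
  rcases lt_or_eq_of_le hca with hlt | heq
  · obtain ⟨e, heS, hce⟩ := exists_lt_of_lt_csSup hSne hlt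
    have heE : e ∈ E := by
      rcases heS.1 with h0 | h0
      · exfalso; rw [h0] at hce; exact absurd hce (not_lt.2 hc)
      · exact h0
    have hed : e < d := lt_of_le_of_lt heS.2 (lt_of_lt_of_le (lt_of_lt_of_le huv hb_ge) hbd)
    exact ⟨e, ⟨hce, hed⟩, heE⟩
  · have hdb : b < d := by
      rcases lt_or_eq_of_le hbd with h | h
      · exact h
      · exact absurd (by rw [heq, h] : (c,d) = (a,b)) hne'
    obtain ⟨e, heT, hed⟩ := exists_lt_of_csInf_lt hne hdb
    exact ⟨e, ⟨lt_of_le_of_lt (heq ▸ ha_le) (lt_of_lt_of_le huv heT.2), hed⟩, heT.1⟩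

end Helpers

lemma lambda0_le {h : ℝ} (hh : 0 ≤ h) : lambda0 E h ≤ h := by
  apply Real.sSup_le _ hh
  rintro l ⟨a, b, ha0, hab, hbh, -, rfl⟩
  linarith

lemma le_lambda0 {a b h : ℝ} (ha : 0 ≤ a) (hab : a ≤ b) (hbh : b ≤ h)
    (hfree : Set.Ioo a b ∩ E = ∅) : b - a ≤ lambda0 E h := by
  apply le_csSup
  · exact ⟨h, by rintro l ⟨a', b', ha0', hab', hbh', -, rfl⟩; linarith⟩
  · exact ⟨a, b, ha, hab, hbh, hfree, rfl⟩

lemma lambda0_le_of_bound {h M : ℝ} (hM : 0 ≤ M)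
    (hb : ∀ a b : ℝ, 0 ≤ a → a ≤ b → b ≤ h → Set.Ioo a b ∩ E = ∅ → b - a ≤ M) :
    lambda0 E h ≤ M := by
  apply Real.sSup_le _ hM
  rintro l ⟨a, b, ha0, hab, hbh, hfree, rfl⟩
  exact hb a b ha0 hab hbh hfree

lemma diag {P : ℕ → ℕ → Prop} (h : ∀ j, ∀ᶠ n in Filter.atTop, P j n) :
    ∃ J : ℕ → ℕ, Filter.Tendsto J Filter.atTop Filter.atTop ∧
      ∀ᶠ n in Filter.atTop, P (J n) n := by
  choose N hN using fun j => (Filter.eventually_atTop.1 (h j))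
  set M : ℕ → ℕ := fun j => (Finset.range (j+1)).sup N + j with hM
  have hMN : ∀ j, N j ≤ M j := fun j =>
    Nat.le_add_right_of_le (Finset.le_sup (Finset.self_mem_range_succ j))
  have hMj : ∀ j, j ≤ M j := fun j => Nat.le_add_left j _
  refine ⟨fun n => Nat.findGreatest (fun j => M j ≤ n) n, ?_, ?_⟩
  · rw [Filter.tendsto_atTop]
    intro j
    filter_upwards [Filter.eventually_ge_atTop (max (M j) j)] with n hn
    exact Nat.le_findGreatest (le_trans (le_max_right _ _) hn)
      (le_trans (le_max_left _ _) hn)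
  · filter_upwards [Filter.eventually_ge_atTop (M 0)] with n hn
    have hspec : M (Nat.findGreatest (fun j => M j ≤ n) n) ≤ n :=
      Nat.findGreatest_spec (P := fun j => M j ≤ n) (Nat.zero_le n) hn
    exact hN _ n (le_trans (hMN _) hspec)

lemma lev_freq (q N : ℕ) : ∃ m ≥ N, (Nat.unpair m).1 = q :=
  ⟨Nat.pair q N, Nat.right_le_pair q N, by rw [Nat.unpair_pair]⟩

lemma seqBuild {Q : ℕ → ℝ → Prop} (lev : ℕ → ℕ)
    (h : ∀ q : ℕ, ∀ b : ℝ, 0 < b → ∃ x : ℝ, 0 < x ∧ x < b ∧ Q q x) :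
    ∃ σ : ℕ → ℝ, (∀ m, 0 < σ m) ∧ (∀ m, σ (m+1) < σ m) ∧
      Filter.Tendsto σ Filter.atTop (nhds 0) ∧ ∀ m, Q (lev m) (σ m) := by
  have htot : ∀ q : ℕ, ∀ b : ℝ, ∃ x : ℝ, 0 < b → (0 < x ∧ x < b ∧ Q q x) := by
    intro q b
    by_cases hb : 0 < b
    · obtain ⟨x, hx⟩ := h q b hb
      exact ⟨x, fun _ => hx⟩
    · exact ⟨1, fun hb' => absurd hb' hb⟩
  choose F hF using htot
  set σ : ℕ → ℝ := fun n => Nat.rec (F (lev 0) 1)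
    (fun n ih => F (lev (n+1)) (min ih (1/(n+2)))) n with hσ
  have hstep : ∀ n, σ (n+1) = F (lev (n+1)) (min (σ n) (1/(n+2))) := fun n => rfl
  have hbase : σ 0 = F (lev 0) 1 := rfl
  have key : ∀ n, 0 < σ n ∧ σ n < 1/(n+1) ∧ Q (lev n) (σ n) := by
    intro n
    induction n with
    | zero =>
      have := hF (lev 0) 1 one_pos
      rw [← hbase] at this
      simpa using this
    | succ n ih =>
      have hmin : (0:ℝ) < min (σ n) (1/(n+2)) := by
        apply lt_min ih.1
        positivity
      have := hF (lev (n+1)) (min (σ n) (1/(n+2))) hmin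
      rw [← hstep] at this
      refine ⟨this.1, lt_of_lt_of_le this.2.1 ?_, this.2.2⟩
      apply le_trans (min_le_right _ _)
      apply le_of_eq
      push_cast
      ring
  have hdec : ∀ m, σ (m+1) < σ m := by
    intro m
    have hmin : (0:ℝ) < min (σ m) (1/(m+2)) := by
      apply lt_min (key m).1
      positivity
    have := hF (lev (m+1)) (min (σ m) (1/(m+2))) hmin
    rw [← hstep] at this
    exact lt_of_lt_of_le this.2.1 (min_le_left _ _)
  refine ⟨σ, fun m => (key m).1, hdec, ?_, fun m => (key m).2.2⟩
  apply squeeze_zero (fun n => (key n).1.le) (fun n => (key n).2.1.le)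
  have : Filter.Tendsto (fun n : ℕ => 1/((n:ℝ)+1)) Filter.atTop (nhds 0) :=
    tendsto_one_div_add_atTop_nhds_zero_nat
  exact this

lemma G_to_SP (hE : E ⊆ Set.Ici 0) {τ : ℕ → ℝ} (hτ : memE0d E τ)
    (hG : ∃ K : ℕ, ∀ j : ℕ, ∀ᶠ n in Filter.atTop, ∃ a b : ℝ,
      IsCompExt E a b ∧ τ n ≤ a ∧ a ≤ ((K:ℝ)+2) * τ n ∧ (j:ℝ) * a ≤ b) :
    StronglyPorousWrt E τ := by
  classical
  obtain ⟨K, hK⟩ := hG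
  set w : ℝ := (K:ℝ)+2 with hw
  have hwpos : (0:ℝ) < w := by positivity
  obtain ⟨J, hJtop, hJP⟩ := diag hK
  obtain ⟨N₀, hN₀⟩ := Filter.eventually_atTop.1 hJP
  have base := hN₀ N₀ le_rfl
  set A : ℕ → ℝ × ℝ := fun n =>
    if hn : N₀ ≤ n then ((hN₀ n hn).choose, (hN₀ n hn).choose_spec.choose)
    else (base.choose, base.choose_spec.choose) with hA
  have hspec : ∀ n, N₀ ≤ n → IsCompExt E (A n).1 (A n).2 ∧ τ n ≤ (A n).1 ∧
      (A n).1 ≤ w * τ n ∧ (J n:ℝ) * (A n).1 ≤ (A n).2 := by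
    intro n hn
    have : A n = ((hN₀ n hn).choose, (hN₀ n hn).choose_spec.choose) := dif_pos hn
    rw [this]
    exact (hN₀ n hn).choose_spec.choose_spec
  have hjunk : ∀ n, ¬(N₀ ≤ n) → IsCompExt E (A n).1 (A n).2 ∧ τ N₀ ≤ (A n).1 := by
    intro n hn
    have : A n = (base.choose, base.choose_spec.choose) := dif_neg hn
    rw [this]
    exact ⟨base.choose_spec.choose_spec.1, base.choose_spec.choose_spec.2.1⟩
  have hcomp : ∀ n, IsCompExt E (A n).1 (A n).2 := by
    intro n
    by_cases hn : N₀ ≤ n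
    · exact (hspec n hn).1
    · exact (hjunk n hn).1
  have hapos : ∀ n, 0 < (A n).1 := by
    intro n
    by_cases hn : N₀ ≤ n
    · exact lt_of_lt_of_le (tau_pos hE hτ n) (hspec n hn).2.1
    · exact lt_of_lt_of_le (tau_pos hE hτ N₀) (hjunk n hn).2
  have hbpos : ∀ n, 0 < (A n).2 := fun n => lt_trans (hapos n) (hcomp n).2.1
  have hτ0 : Filter.Tendsto τ Filter.atTop (nhds 0) := hτ.2.1
  refine ⟨A, ⟨hapos, hcomp, ?_, ?_⟩, ?_⟩
  · -- tendsto .1 → 0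
    apply squeeze_zero' (Filter.Eventually.of_forall (fun n => (hapos n).le))
      (g := fun n => w * τ n)
    · filter_upwards [Filter.eventually_ge_atTop N₀] with n hn
      exact (hspec n hn).2.2.1
    · have : Filter.Tendsto (fun n => w * τ n) Filter.atTop (nhds (w * 0)) :=
        hτ0.const_mul w
      simpa using this
  · -- ratio tendsto 1
    have hr0 : Filter.Tendsto (fun n => (A n).1 / (A n).2) Filter.atTop (nhds 0) := by
      apply squeeze_zero' (Filter.Eventually.of_forall
        (fun n => div_nonneg (hapos n).le (hbpos n).le)) (g := fun n => 1/(J n:ℝ))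
      · have hJ1 : ∀ᶠ n in Filter.atTop, 1 ≤ J n := hJtop.eventually_ge_atTop 1
        filter_upwards [Filter.eventually_ge_atTop N₀, hJ1] with n hn hJn
        have hJpos : (0:ℝ) < (J n:ℝ) := by exact_mod_cast hJn
        rw [div_le_div_iff₀ (hbpos n) hJpos]
        have := (hspec n hn).2.2.2
        linarith [this]
      · have : Filter.Tendsto (fun n => ((J n:ℝ))⁻¹) Filter.atTop (nhds 0) :=
          (tendsto_natCast_atTop_atTop.comp hJtop).inv_tendsto_atTop
        simpa [one_div] using this
    have heq : (fun n => ((A n).2 - (A n).1) / (A n).2)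
        = fun n => 1 - (A n).1 / (A n).2 := by
      funext n
      rw [sub_div, div_self (hbpos n).ne']
    rw [heq]
    have := hr0.const_sub 1
    rw [sub_zero] at this
    exact this
  · -- SeqEquiv
    refine ⟨1/w, 1, by positivity, one_pos, ?_⟩
    filter_upwards [Filter.eventually_ge_atTop N₀] with n hn
    constructor
    · rw [div_mul_eq_mul_div, div_le_iff₀ hwpos]
      have := (hspec n hn).2.2.1
      linarith
    · rw [one_mul]
      exact (hspec n hn).2.1

set_option maxHeartbeats 2000000 in
lemma G_of_H (hE : E ⊆ Set.Ici 0) (hpor : porosity E = 1)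
    (H : ∀ τ : ℕ → ℝ, memE0d E τ →
      ∃ h : ℕ → ℝ, (∀ n, 0 < h n) ∧ Filter.Tendsto h Filter.atTop (nhds 0) ∧
        Filter.Tendsto (fun n => lambda0 E (h n) / h n) Filter.atTop (nhds (porosity E)) ∧
        SeqEquiv h τ)
    {τ : ℕ → ℝ} (hτ : memE0d E τ) :
    ∃ K : ℕ, ∀ j : ℕ, ∀ᶠ n in Filter.atTop, ∃ a b : ℝ,
      IsCompExt E a b ∧ τ n ≤ a ∧ a ≤ ((K:ℝ)+2) * τ n ∧ (j:ℝ) * a ≤ b := by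
  classical
  by_contra hG
  have hG' : ∀ K : ℕ, ∃ j : ℕ, ∃ᶠ n in Filter.atTop, ∀ a b : ℝ,
      IsCompExt E a b → τ n ≤ a → a ≤ ((K:ℝ)+2) * τ n → b < (j:ℝ) * a := by
    intro K
    by_contra hc
    push_neg at hc
    apply hG
    refine ⟨K, fun j => ?_⟩
    have hcj := hc j
    filter_upwards [hcj] with n hn
    obtain ⟨a, b, hab, h1, h2, h3⟩ := hn
    exact ⟨a, b, hab, h1, h2, h3⟩
  choose j hj using hG'
  have hw2 : ∀ K : ℕ, (2:ℝ) ≤ (K:ℝ)+2 := fun K => by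
    have := Nat.cast_nonneg (α := ℝ) K; linarith
  have hwpos : ∀ K : ℕ, (0:ℝ) < (K:ℝ)+2 := fun K => by positivity
  have hR1 : ∀ K, (1:ℝ) ≤ (j K:ℝ)+1 := fun K => by
    have := Nat.cast_nonneg (α := ℝ) (j K); linarith
  have hRpos : ∀ K, (0:ℝ) < (j K:ℝ)+1 := fun K => by positivity
  have hτ0E : τ 0 ∈ E := (hτ.2.2 0).1
  have hτpos : ∀ n, 0 < τ n := tau_pos hE hτ
  -- the per-level point property
  set Qs : ℕ → ℝ → Prop := fun K x => ∃ n : ℕ,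
    (∀ a b : ℝ, IsCompExt E a b → τ n ≤ a → a ≤ ((K:ℝ)+2) * τ n → b < (j K:ℝ) * a) ∧
    x ∈ E ∧ ((K:ℝ)+2) * τ n < x ∧ x ≤ 2*((j K:ℝ)+1)*(((K:ℝ)+2)*τ n) ∧
    2*((j K:ℝ)+1)*(((K:ℝ)+2)*τ n) ≤ τ 0 with hQs
  have hbuild : ∀ K : ℕ, ∀ bd : ℝ, 0 < bd → ∃ x : ℝ, 0 < x ∧ x < bd ∧ Qs K x := by
    intro K bd hbd
    set W : ℝ := (K:ℝ)+2 with hW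
    set R : ℝ := (j K:ℝ)+1 with hR
    have hden : (0:ℝ) < 2*R*W := by positivity
    have hεpos : (0:ℝ) < min bd (τ 0) / (2*R*W) := div_pos (lt_min hbd (hτpos 0)) hden
    have hev : ∀ᶠ n in Filter.atTop, τ n < min bd (τ 0) / (2*R*W) :=
      hτ.2.1.eventually_lt_const hεpos
    obtain ⟨n, hSn, hsmall⟩ := ((hj K).and_eventually hev).exists
    have hτn := hτpos n
    have hsmall' : 2*R*(W*τ n) < min bd (τ 0) := by
      rw [lt_div_iff₀ hden] at hsmall
      nlinarith [hsmall]
    have h2RWbd : 2*R*(W*τ n) < bd := lt_of_lt_of_le hsmall' (min_le_left _ _)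
    have h2RWτ0 : 2*R*(W*τ n) ≤ τ 0 := le_of_lt (lt_of_lt_of_le hsmall' (min_le_right _ _))
    -- top of E in the window [τ n, W τ n]
    have hXne : (E ∩ Set.Icc (τ n) (W*τ n)).Nonempty := by
      refine ⟨τ n, (hτ.2.2 n).1, le_refl _, ?_⟩
      nlinarith [hw2 K]
    have hXbdd : BddAbove (E ∩ Set.Icc (τ n) (W*τ n)) := ⟨W*τ n, fun e he => he.2.2⟩
    set x₀ := sSup (E ∩ Set.Icc (τ n) (W*τ n)) with hx₀
    have hx₀1 : τ n ≤ x₀ := le_csSup hXbdd ⟨(hτ.2.2 n).1, le_refl _, by nlinarith [hw2 K]⟩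
    have hx₀2 : x₀ ≤ W*τ n := csSup_le hXne (fun e he => he.2.2)
    have hx₀pos : 0 < x₀ := lt_of_lt_of_le hτn hx₀1
    have hclaim : (E ∩ Set.Ioc x₀ (2*R*x₀)).Nonempty := by
      by_contra hempty
      rw [Set.not_nonempty_iff_eq_empty] at hempty
      have hfree : Set.Ioo x₀ (2*R*x₀) ∩ E = ∅ := by
        rw [Set.eq_empty_iff_forall_notMem]
        rintro e ⟨⟨h1, h2⟩, heE⟩
        exact (Set.eq_empty_iff_forall_notMem.1 hempty e) ⟨heE, h1, h2.le⟩
      have h2R : x₀ < 2*R*x₀ := by nlinarith [hR1 K]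
      have hup : τ 0 ∈ E ∩ Set.Ici (2*R*x₀) := by
        refine ⟨hτ0E, ?_⟩
        have : 2*R*x₀ ≤ 2*R*(W*τ n) := by nlinarith [hRpos K]
        exact le_trans this h2RWτ0
      obtain ⟨a, b, hab, ha_le, hb_ge, ha_eq⟩ :=
        comp_make hE hx₀pos.le h2R hfree ⟨τ 0, hup⟩
      have hxa : x₀ ≤ a := by
        rw [← ha_eq]
        refine csSup_le_csSup ⟨x₀, ?_⟩ hXne ?_
        · rintro e ⟨-, he2⟩; exact he2
        · rintro e he
          exact ⟨Set.mem_insert_of_mem _ he.1, le_csSup hXbdd he⟩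
      have ha' : a = x₀ := le_antisymm ha_le hxa
      have hlt := hSn a b hab (ha' ▸ hx₀1) (by rw [ha']; exact hx₀2)
      rw [ha'] at hlt
      nlinarith [hb_ge, hx₀pos]
    obtain ⟨y, hyE, hy1, hy2⟩ := hclaim
    have hyW : W*τ n < y := by
      by_contra hc
      push_neg at hc
      have : y ∈ E ∩ Set.Icc (τ n) (W*τ n) := ⟨hyE, le_trans hx₀1 hy1.le, hc⟩
      exact absurd (le_csSup hXbdd this) (not_le.2 hy1)
    have hy2' : y ≤ 2*R*(W*τ n) := by
      refine le_trans hy2 ?_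
      nlinarith [hRpos K, hx₀2]
    refine ⟨y, ?_, lt_of_le_of_lt hy2' h2RWbd, n, hSn, hyE, hyW, hy2', h2RWτ0⟩
    nlinarith [hwpos K, hτn, hyW]
  obtain ⟨σ, hσpos, hσdec, hσ0, hσQ⟩ := seqBuild (fun m => (Nat.unpair m).1) hbuild
  have hσmem : memE0d E σ := by
    refine ⟨Filter.Eventually.of_forall (fun m => (hσdec m).le), hσ0, fun m => ?_⟩
    obtain ⟨n, -, hxE, -, -, -⟩ := hσQ m
    exact ⟨hxE, by simpa using (hσpos m).ne'⟩
  obtain ⟨h, hhpos, hh0, hhL, c₁, c₂, hc₁, hc₂, hsq⟩ := H σ hσmem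
  rw [hpor] at hhL
  obtain ⟨Kst, hKst⟩ := exists_nat_ge (2*c₂)
  set W : ℝ := (Kst:ℝ)+2 with hWdef
  set R : ℝ := (j Kst:ℝ)+1 with hRdef
  have hWpos : (0:ℝ) < W := hwpos Kst
  have hRpos' : (0:ℝ) < R := hRpos Kst
  have hR1' : (1:ℝ) ≤ R := hR1 Kst
  have hc₂W : 2*c₂ ≤ W := by
    rw [hWdef]; linarith
  set δ : ℝ := min (1/2) (min 1 c₁ / (2*R)) with hδdef
  have hmin1c₁ : (0:ℝ) < min 1 c₁ := lt_min one_pos hc₁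
  have hδpos : 0 < δ := lt_min (by norm_num) (div_pos hmin1c₁ (by positivity))
  have hδhalf : δ ≤ 1/2 := min_le_left _ _
  have hδR : δ ≤ min 1 c₁ / (2*R) := min_le_right _ _
  have hδR1 : δ ≤ 1/(2*R) := by
    refine le_trans hδR ?_
    gcongr
    exact min_le_left _ _
  have hδc₁ : δ ≤ c₁/(2*R) := by
    refine le_trans hδR ?_
    gcongr
    exact min_le_right _ _
  have hev2 : ∀ᶠ m in Filter.atTop, 1 - δ < lambda0 E (h m)/h m :=
    hhL.eventually_const_lt (by linarith)
  obtain ⟨M₀, hM₀⟩ := Filter.eventually_atTop.1 (hsq.and hev2)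
  obtain ⟨m, hmM, hmlev⟩ := lev_freq Kst M₀
  obtain ⟨⟨hsq1, hsq2⟩, hgt⟩ := hM₀ m hmM
  have hQ := hσQ m
  rw [hmlev] at hQ
  obtain ⟨n, hSn, hxE, hxW, hx2RW, h2RWτ0⟩ := hQ
  have hm_pos := hhpos m
  have hτn := hτpos n
  -- key facts
  have key1 : τ n ≤ h m / 2 := by
    have h1 : W * τ n < c₂ * h m := lt_of_lt_of_le hxW hsq2
    nlinarith [hc₂W, hWpos, hm_pos]
  have key2 : c₁ * h m ≤ 2*R*(W*τ n) := le_trans hsq1 hx2RW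
  -- the contradiction: lambda0 / h ≤ 1 - δ
  have hfinal : lambda0 E (h m) ≤ (1-δ) * h m := by
    apply lambda0_le_of_bound (by nlinarith)
    intro α β hα0 hαβ hβh hfree
    rcases lt_or_ge α (τ n) with hcase | hcase
    · have hβτ : β ≤ τ n := by
        by_contra hc
        push_neg at hc
        exact (Set.eq_empty_iff_forall_notMem.1 hfree (τ n)) ⟨⟨hcase, hc⟩, (hτ.2.2 n).1⟩
      nlinarith
    · set x' := sSup (E ∩ Set.Icc (τ n) α) with hx'def
      have hXne : (E ∩ Set.Icc (τ n) α).Nonempty := ⟨τ n, (hτ.2.2 n).1, le_refl _, hcase⟩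
      have hXbdd : BddAbove (E ∩ Set.Icc (τ n) α) := ⟨α, fun e he => he.2.2⟩
      have hx'1 : τ n ≤ x' := le_csSup hXbdd ⟨(hτ.2.2 n).1, le_refl _, hcase⟩
      have hx'2 : x' ≤ α := csSup_le hXne (fun e he => he.2.2)
      have hx'pos : 0 < x' := lt_of_lt_of_le hτn hx'1
      rcases le_or_gt x' (W * τ n) with hxw | hxw
      · have hββ : β ≤ 2*R*x' := by
          by_contra hc
          push_neg at hc
          have hfree2 : Set.Ioo x' (2*R*x') ∩ E = ∅ := by
            rw [Set.eq_empty_iff_forall_notMem]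
            rintro e ⟨⟨h1, h2⟩, heE⟩
            rcases le_or_gt e α with h3 | h3
            · have hmem : e ∈ E ∩ Set.Icc (τ n) α := ⟨heE, le_trans hx'1 h1.le, h3⟩
              exact absurd (le_csSup hXbdd hmem) (not_le.2 h1)
            · exact (Set.eq_empty_iff_forall_notMem.1 hfree e) ⟨⟨h3, lt_trans h2 hc⟩, heE⟩
          have h2R : x' < 2*R*x' := by nlinarith
          have hup : τ 0 ∈ E ∩ Set.Ici (2*R*x') := by
            refine ⟨hτ0E, ?_⟩
            have : 2*R*x' ≤ 2*R*(W*τ n) := by nlinarith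
            exact le_trans this h2RWτ0
          obtain ⟨a, b, hab, ha_le, hb_ge, ha_eq⟩ :=
            comp_make hE hx'pos.le h2R hfree2 ⟨τ 0, hup⟩
          have hxa : x' ≤ a := by
            rw [← ha_eq]
            refine csSup_le_csSup ⟨x', ?_⟩ hXne ?_
            · rintro e ⟨-, he2⟩; exact he2
            · rintro e he
              exact ⟨Set.mem_insert_of_mem _ he.1, le_csSup hXbdd he⟩
          have ha' : a = x' := le_antisymm ha_le hxa
          have hlt := hSn a b hab (ha' ▸ hx'1) (by rw [ha']; exact hxw)
          rw [ha'] at hlt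
          nlinarith [hb_ge, hx'pos]
        have hβ0 : 0 ≤ β := le_trans hα0 hαβ
        have hx'β : β/(2*R) ≤ x' := by
          rw [div_le_iff₀ (by positivity)]
          nlinarith
        have hstep1 : β - α ≤ β - β/(2*R) := by linarith
        have hstep2 : β - β/(2*R) ≤ h m - h m/(2*R) := by
          have h2R1 : (0:ℝ) < 2*R := by positivity
          have : β * (1 - 1/(2*R)) ≤ h m * (1 - 1/(2*R)) := by
            apply mul_le_mul_of_nonneg_right hβh
            rw [sub_nonneg, div_le_one h2R1]
            linarith
          calc β - β/(2*R) = β * (1 - 1/(2*R)) := by ring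
            _ ≤ h m * (1 - 1/(2*R)) := this
            _ = h m - h m/(2*R) := by ring
        have hstep3 : h m - h m/(2*R) ≤ (1-δ) * h m := by
          have : δ * h m ≤ (1/(2*R)) * h m :=
            mul_le_mul_of_nonneg_right hδR1 hm_pos.le
          calc h m - h m/(2*R) = h m - (1/(2*R)) * h m := by ring
            _ ≤ h m - δ * h m := by linarith
            _ = (1-δ) * h m := by ring
        linarith
      · -- x' > W τ n
        have hWτ : c₁ * h m / (2*R) ≤ W * τ n := by
          rw [div_le_iff₀ (by positivity)]
          nlinarith [key2]
        have hstep3 : h m - c₁*h m/(2*R) ≤ (1-δ) * h m := by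
          have : δ * h m ≤ (c₁/(2*R)) * h m :=
            mul_le_mul_of_nonneg_right hδc₁ hm_pos.le
          have heq : c₁*h m/(2*R) = (c₁/(2*R))*h m := by ring
          nlinarith
        have : β - α ≤ h m - W*τ n := by
          have : W*τ n < α := lt_of_lt_of_le hxw hx'2
          linarith
        have hch : c₁*h m/(2*R) ≤ W*τ n := hWτ
        nlinarith [this, hch, hstep3]
  have hcontra : lambda0 E (h m) / h m ≤ 1 - δ := by
    rw [div_le_iff₀ hm_pos]
    linarith [hfinal]
  linarith [hgt, hcontra]

set_option maxHeartbeats 2000000 in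
lemma forward_B (hE : E ⊆ Set.Ici 0) (hcsp : CSP E) {τ : ℕ → ℝ} (hτ : memE0d E τ) :
    ∃ c : ℝ, 0 < c ∧ ∀ j : ℕ, ∀ᶠ n in Filter.atTop, ∃ a b : ℝ,
      IsCompExt E a b ∧ (j:ℝ) * a ≤ τ n ∧ c * τ n ≤ b := by
  classical
  by_contra hB
  have hB' : ∀ c : ℝ, 0 < c → ∃ j : ℕ, ∃ᶠ n in Filter.atTop, ∀ a b : ℝ,
      IsCompExt E a b → (j:ℝ) * a ≤ τ n → b < c * τ n := by
    intro c hc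
    by_contra hcc
    push_neg at hcc
    apply hB
    refine ⟨c, hc, fun j => ?_⟩
    have hcj := hcc j
    filter_upwards [hcj] with n hn
    obtain ⟨a, b, hab, h1, h2⟩ := hn
    exact ⟨a, b, hab, h1, h2⟩
  have hτpos : ∀ n, 0 < τ n := tau_pos hE hτ
  set γ : ℕ → ℝ := fun q => 1/((q:ℝ)+2)^3 with hγdef
  have hWq2 : ∀ q : ℕ, (2:ℝ) ≤ (q:ℝ)+2 := fun q => by
    have := Nat.cast_nonneg (α := ℝ) q; linarith
  have hWqpos : ∀ q : ℕ, (0:ℝ) < (q:ℝ)+2 := fun q => lt_of_lt_of_le two_pos (hWq2 q)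
  have hγpos : ∀ q, 0 < γ q := fun q => by
    rw [hγdef]
    positivity
  have hγle1 : ∀ q, γ q ≤ 1 := fun q => by
    rw [hγdef]
    rw [div_le_one (by positivity)]
    have h8 : (2:ℝ)^3 ≤ ((q:ℝ)+2)^3 := pow_le_pow_left₀ (by norm_num) (hWq2 q) 3
    norm_num at h8
    linarith
  choose j hj using fun q => hB' (γ q) (hγpos q)
  set p : ℕ → ℝ := fun q => min (γ q) (1/((j q:ℝ)+1)) with hpdef
  have hjpos : ∀ q, (0:ℝ) < (j q:ℝ)+1 := fun q => by positivity
  have hppos : ∀ q, 0 < p q := fun q => lt_min (hγpos q) (by positivity)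
  have hpγ : ∀ q, p q ≤ γ q := fun q => min_le_left _ _
  have hpj : ∀ q, p q ≤ 1/((j q:ℝ)+1) := fun q => min_le_right _ _
  set Qs : ℕ → ℝ → Prop := fun q x => ∃ n : ℕ, ∃ t : ℝ,
    (∀ a b : ℝ, IsCompExt E a b → (j q:ℝ) * a ≤ τ n → b < γ q * τ n) ∧
    x ∈ E ∧ x ≤ t ∧ t < 2*x ∧ t ≤ γ q * τ n ∧ p q * τ n ≤ t ∧
    E ∩ Set.Ioc t (γ q * τ n) = ∅ with hQs
  have hbuild : ∀ q : ℕ, ∀ bd : ℝ, 0 < bd → ∃ x : ℝ, 0 < x ∧ x < bd ∧ Qs q x := by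
    intro q bd hbd
    have hεpos : (0:ℝ) < bd / γ q := div_pos hbd (hγpos q)
    have hev : ∀ᶠ n in Filter.atTop, τ n < bd / γ q := hτ.2.1.eventually_lt_const hεpos
    obtain ⟨n, hSn, hsmall⟩ := ((hj q).and_eventually hev).exists
    have hτn := hτpos n
    have hGpos : 0 < γ q * τ n := mul_pos (hγpos q) hτn
    have hGbd : γ q * τ n < bd := by
      rw [lt_div_iff₀ (hγpos q)] at hsmall
      rw [mul_comm]
      exact hsmall
    -- E has points in (0, γ q * τ n]
    obtain ⟨k, hk⟩ := (hτ.2.1.eventually_lt_const hGpos).exists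
    have hTne : (E ∩ Set.Ioc 0 (γ q * τ n)).Nonempty :=
      ⟨τ k, (hτ.2.2 k).1, hτpos k, hk.le⟩
    have hTbdd : BddAbove (E ∩ Set.Ioc 0 (γ q * τ n)) := ⟨γ q * τ n, fun e he => he.2.2⟩
    set t := sSup (E ∩ Set.Ioc 0 (γ q * τ n)) with htdef
    have ht1 : t ≤ γ q * τ n := csSup_le hTne (fun e he => he.2.2)
    have htpos : 0 < t :=
      lt_of_lt_of_le (hτpos k) (le_csSup hTbdd ⟨(hτ.2.2 k).1, hτpos k, hk.le⟩)
    have hfreeIoc : E ∩ Set.Ioc t (γ q * τ n) = ∅ := by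
      rw [Set.eq_empty_iff_forall_notMem]
      rintro e ⟨heE, h1, h2⟩
      exact absurd (le_csSup hTbdd ⟨heE, lt_trans htpos h1, h2⟩) (not_le.2 h1)
    have hpin : p q * τ n ≤ t := by
      rcases eq_or_lt_of_le ht1 with heq | hlt
      · rw [heq]
        nlinarith [hpγ q, hτn]
      · have hfree : Set.Ioo t (γ q * τ n) ∩ E = ∅ := by
          rw [Set.eq_empty_iff_forall_notMem]
          rintro e ⟨⟨h1, h2⟩, heE⟩
          exact (Set.eq_empty_iff_forall_notMem.1 hfreeIoc e) ⟨heE, h1, h2.le⟩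
        have hup : τ n ∈ E ∩ Set.Ici (γ q * τ n) := by
          refine ⟨(hτ.2.2 n).1, ?_⟩
          calc γ q * τ n ≤ 1 * τ n := mul_le_mul_of_nonneg_right (hγle1 q) hτn.le
            _ = τ n := one_mul _
        obtain ⟨a, b, hab, ha_le, hb_ge, ha_eq⟩ :=
          comp_make hE htpos.le hlt hfree ⟨τ n, hup⟩
        have hta : t ≤ a := by
          rw [← ha_eq]
          refine csSup_le_csSup ⟨t, ?_⟩ hTne ?_
          · rintro e ⟨-, he2⟩; exact he2
          · rintro e he
            exact ⟨Set.mem_insert_of_mem _ he.1, le_csSup hTbdd he⟩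
        have ha' : a = t := le_antisymm ha_le hta
        have hnle : ¬ ((j q:ℝ) * a ≤ τ n) := fun hle =>
          absurd (hSn a b hab hle) (not_lt.2 hb_ge)
        push_neg at hnle
        rw [ha'] at hnle
        have h1 : τ n ≤ ((j q:ℝ)+1) * t := by
          have hj1 : (j q:ℝ) * t ≤ ((j q:ℝ)+1) * t :=
            mul_le_mul_of_nonneg_right (by linarith) htpos.le
          linarith
        have h2 : p q * τ n * ((j q:ℝ)+1) ≤ τ n := by
          have hh := mul_le_mul_of_nonneg_right (hpj q) hτn.le
          rw [div_mul_eq_mul_div, one_mul, le_div_iff₀ (hjpos q)] at hh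
          linarith
        have h4 : p q * τ n * ((j q:ℝ)+1) ≤ t * ((j q:ℝ)+1) := by
          rw [mul_comm t]
          exact le_trans h2 h1
        exact le_of_mul_le_mul_right h4 (hjpos q)
    obtain ⟨e, heMem, he2⟩ := exists_lt_of_lt_csSup hTne (half_lt_self htpos)
    have he_le : e ≤ t := le_csSup hTbdd heMem
    have hepos : 0 < e := heMem.2.1
    refine ⟨e, hepos, lt_of_le_of_lt (le_trans he_le ht1) hGbd,
      n, t, hSn, heMem.1, he_le, by linarith, ht1, hpin, hfreeIoc⟩
  obtain ⟨σ, hσpos, hσdec, hσ0, hσQ⟩ := seqBuild (fun m => (Nat.unpair m).1) hbuild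
  have hσmem : memE0d E σ := by
    refine ⟨Filter.Eventually.of_forall (fun m => (hσdec m).le), hσ0, fun m => ?_⟩
    obtain ⟨n, t, -, hxE, -⟩ := hσQ m
    exact ⟨hxE, by simpa using (hσpos m).ne'⟩
  obtain ⟨A, ⟨hApos, hAcomp, hA0, hAr⟩, c₁, c₂, hc₁, hc₂, hsq⟩ := hcsp σ hσmem
  have hbpos : ∀ m, 0 < (A m).2 := fun m => lt_trans (hApos m) (hAcomp m).2.1
  have hr0 : Filter.Tendsto (fun m => (A m).1/(A m).2) Filter.atTop (nhds 0) := by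
    have heq : (fun m => (A m).1/(A m).2)
        = fun m => 1 - ((A m).2 - (A m).1)/(A m).2 := by
      funext m
      rw [sub_div, div_self (hbpos m).ne']
      ring
    rw [heq]
    have := hAr.const_sub 1
    rw [sub_self] at this
    exact this
  obtain ⟨q1, hq1⟩ := exists_nat_ge (max c₂ (1/c₁))
  have hc₂W : c₂ ≤ (q1:ℝ)+2 := le_trans (le_max_left _ _) (by linarith)
  have h1c₁W : 1/c₁ ≤ (q1:ℝ)+2 := le_trans (le_max_right _ _) (by linarith)
  set Wq : ℝ := (q1:ℝ)+2 with hWqdef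
  have hWpos : (0:ℝ) < Wq := hWqpos q1
  set Rbd : ℝ := max (2/p q1) (Wq^3) + c₂ + 1 with hRbddef
  have hRbdpos : 0 < Rbd := by
    have h1 : (0:ℝ) < 2/p q1 := by positivity
    have := le_max_left (2/p q1) (Wq^3)
    rw [hRbddef]
    linarith
  have hRbd2p : 2/p q1 ≤ Rbd := by
    have := le_max_left (2/p q1) (Wq^3); rw [hRbddef]; linarith
  have hRbdW : Wq^3 ≤ Rbd := by
    have := le_max_right (2/p q1) (Wq^3); rw [hRbddef]; linarith
  have hRbdc₂ : c₂ + 1 ≤ Rbd := by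
    have h1 : (0:ℝ) < 2/p q1 := by positivity
    have := le_max_left (2/p q1) (Wq^3); rw [hRbddef]; linarith
  have hevR : ∀ᶠ m in Filter.atTop, Rbd * (A m).1 < (A m).2 := by
    have hpos : (0:ℝ) < 1/Rbd := by positivity
    filter_upwards [hr0.eventually_lt_const hpos] with m hm
    rw [div_lt_div_iff₀ (hbpos m) hRbdpos] at hm
    nlinarith [hm]
  obtain ⟨M₀, hM₀⟩ := Filter.eventually_atTop.1 (hsq.and hevR)
  obtain ⟨m, hmM, hmlev⟩ := lev_freq q1 M₀
  obtain ⟨⟨hsq1, hsq2⟩, hRm⟩ := hM₀ m hmM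
  have hQ := hσQ m
  rw [hmlev] at hQ
  obtain ⟨n, t, hSn, hxE, hxt, ht2x, htγ, hpt, hfreeIoc⟩ := hQ
  have hab := (hAcomp m).2.1
  have hfree := (hAcomp m).2.2.1
  have hapos := hApos m
  have hbp := hbpos m
  have hτn := hτpos n
  have hx := hσpos m
  have htpos : 0 < t := lt_of_lt_of_le hx hxt
  -- σ m ≤ a
  have hσa : σ m ≤ (A m).1 := by
    by_contra hc
    push_neg at hc
    have hnotin : σ m ∉ Set.Ioo (A m).1 (A m).2 := fun hh =>
      (Set.eq_empty_iff_forall_notMem.1 hfree (σ m)) ⟨hh, hxE⟩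
    have hbσ : (A m).2 ≤ σ m := by
      by_contra hc2
      push_neg at hc2
      exact hnotin ⟨hc, hc2⟩
    nlinarith [hsq2, hRm, hapos]
  have haW : (A m).1 ≤ Wq * σ m := by
    have h1 : (A m).1 ≤ σ m / c₁ := by
      rw [le_div_iff₀ hc₁]
      nlinarith [hsq1]
    have h2 : σ m / c₁ = (1/c₁) * σ m := by ring
    rw [h2] at h1
    exact le_trans h1 (mul_le_mul_of_nonneg_right h1c₁W hx.le)
  have hγWle : Wq * γ q1 ≤ 1/4 := by
    have heq : Wq * γ q1 = 1/Wq^2 := by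
      rw [hγdef, hWqdef]
      field_simp
    rw [heq]
    rw [div_le_div_iff₀ (by positivity) (by norm_num)]
    nlinarith [hWq2 q1]
  have hγWq : γ q1 * Wq^3 = 1 := by
    rw [hγdef, hWqdef]
    field_simp
  rcases le_or_gt (A m).1 t with hcase1 | hcase1
  · -- a ≤ t : contradiction via pin
    have haτ : (A m).1 < τ n := by
      have h1 : t ≤ γ q1 * τ n := htγ
      nlinarith [hγle1 q1, hτn, hγpos q1]
    have hbτ : (A m).2 ≤ τ n := by
      by_contra hc
      push_neg at hc
      exact (Set.eq_empty_iff_forall_notMem.1 hfree (τ n)) ⟨⟨haτ, hc⟩, (hτ.2.2 n).1⟩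
    -- Rbd * (p q1 * τ n / 2) < b ≤ τ n gives Rbd * p q1 < 2, contra Rbd ≥ 2/p
    have h1 : Rbd * σ m < (A m).2 :=
      lt_of_le_of_lt (mul_le_mul_of_nonneg_left hσa hRbdpos.le) hRm
    have h2 : p q1 * τ n < 2 * σ m := lt_of_le_of_lt hpt ht2x
    have h3 : 2 ≤ Rbd * p q1 := by
      rw [div_le_iff₀ (hppos q1)] at hRbd2p
      linarith
    nlinarith [hppos q1, hτn, hRbdpos]
  · rcases le_or_gt (A m).1 (γ q1 * τ n) with hcase2 | hcase2
    · -- t < a ≤ γ τ n : impossible by free zone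
      obtain ⟨e, heE, he1, he2⟩ := left_acc (hAcomp m) htpos.le hcase1
      exact (Set.eq_empty_iff_forall_notMem.1 hfreeIoc e) ⟨heE, he1, le_trans he2 hcase2⟩
    · -- γ τ n < a
      have haτ : (A m).1 < τ n := by
        have h1 : (A m).1 ≤ Wq * (γ q1 * τ n) := by
          refine le_trans haW (mul_le_mul_of_nonneg_left (le_trans hxt htγ) hWpos.le)
        have h2 : Wq * (γ q1 * τ n) ≤ (1/4) * τ n := by
          have := mul_le_mul_of_nonneg_right hγWle hτn.le
          nlinarith [this]
        nlinarith [hτn]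
      have hbτ : (A m).2 ≤ τ n := by
        by_contra hc
        push_neg at hc
        exact (Set.eq_empty_iff_forall_notMem.1 hfree (τ n)) ⟨⟨haτ, hc⟩, (hτ.2.2 n).1⟩
      -- Rbd * γ τ n < b ≤ τ n gives Rbd * γ < 1, so Rbd < Wq^3, contra
      have h1 : Rbd * (γ q1 * τ n) < (A m).2 := by
        refine lt_of_le_of_lt (mul_le_mul_of_nonneg_left hcase2.le hRbdpos.le) hRm
      have h2 : Rbd * γ q1 < 1 := by
        nlinarith [hτn]
      have h3 : Rbd < Wq^3 := by
        nlinarith [hγWq, hWpos, hγpos q1]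
      nlinarith [hRbdW]

set_option maxHeartbeats 1000000 in
lemma B_to_h (hE : E ⊆ Set.Ici 0) (hpor : porosity E = 1) {τ : ℕ → ℝ} (hτ : memE0d E τ)
    (hB : ∃ c : ℝ, 0 < c ∧ ∀ j : ℕ, ∀ᶠ n in Filter.atTop, ∃ a b : ℝ,
      IsCompExt E a b ∧ (j:ℝ) * a ≤ τ n ∧ c * τ n ≤ b) :
    ∃ h : ℕ → ℝ, (∀ n, 0 < h n) ∧ Filter.Tendsto h Filter.atTop (nhds 0) ∧
      Filter.Tendsto (fun n => lambda0 E (h n) / h n) Filter.atTop (nhds (porosity E)) ∧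
      SeqEquiv h τ := by
  classical
  obtain ⟨c, hc, hBj⟩ := hB
  have hτpos : ∀ n, 0 < τ n := tau_pos hE hτ
  set c' : ℝ := min c 1 with hc'def
  have hc'pos : 0 < c' := lt_min hc one_pos
  have hc'le1 : c' ≤ 1 := min_le_right _ _
  have hc'lec : c' ≤ c := min_le_left _ _
  obtain ⟨J, hJtop, hJP⟩ := diag hBj
  obtain ⟨N₀, hN₀⟩ := Filter.eventually_atTop.1 hJP
  set h : ℕ → ℝ := fun n => if hn : N₀ ≤ n then
      min ((hN₀ n hn).choose_spec.choose) (τ n) else τ n with hhdef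
  have hspec : ∀ n (hn : N₀ ≤ n), IsCompExt E ((hN₀ n hn).choose) ((hN₀ n hn).choose_spec.choose) ∧
      (J n:ℝ) * (hN₀ n hn).choose ≤ τ n ∧ c * τ n ≤ (hN₀ n hn).choose_spec.choose :=
    fun n hn => (hN₀ n hn).choose_spec.choose_spec
  have hval : ∀ n (hn : N₀ ≤ n), h n = min ((hN₀ n hn).choose_spec.choose) (τ n) :=
    fun n hn => dif_pos hn
  have hval' : ∀ n, ¬(N₀ ≤ n) → h n = τ n := fun n hn => dif_neg hn
  have hpos : ∀ n, 0 < h n := by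
    intro n
    by_cases hn : N₀ ≤ n
    · rw [hval n hn]
      exact lt_min (lt_of_lt_of_le (mul_pos hc (hτpos n)) (hspec n hn).2.2) (hτpos n)
    · rw [hval' n hn]; exact hτpos n
  have hleτ : ∀ n, h n ≤ τ n := by
    intro n
    by_cases hn : N₀ ≤ n
    · rw [hval n hn]; exact min_le_right _ _
    · rw [hval' n hn]
  have hgeτ : ∀ n, N₀ ≤ n → c' * τ n ≤ h n := by
    intro n hn
    rw [hval n hn]
    refine le_min (le_trans ?_ (hspec n hn).2.2) ?_
    · exact mul_le_mul_of_nonneg_right hc'lec (hτpos n).le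
    · calc c' * τ n ≤ 1 * τ n := mul_le_mul_of_nonneg_right hc'le1 (hτpos n).le
        _ = τ n := one_mul _
  refine ⟨h, hpos, ?_, ?_, 1, 1/c', one_pos, by positivity, ?_⟩
  · exact squeeze_zero (fun n => (hpos n).le) hleτ hτ.2.1
  · -- main tendsto
    rw [hpor]
    have hup : ∀ n, lambda0 E (h n) / h n ≤ 1 := fun n => by
      rw [div_le_one (hpos n)]
      exact lambda0_le (hpos n).le
    have hlow : ∀ᶠ n in Filter.atTop,
        1 - (1/(c' * (J n:ℝ))) ≤ lambda0 E (h n) / h n := by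
      have hJ2 : ∀ᶠ n in Filter.atTop, (2/c' : ℝ) ≤ (J n:ℝ) := by
        obtain ⟨j₀, hj₀⟩ := exists_nat_ge (2/c')
        filter_upwards [hJtop.eventually_ge_atTop j₀] with n hn
        exact le_trans hj₀ (by exact_mod_cast hn)
      filter_upwards [Filter.eventually_ge_atTop N₀, hJ2] with n hn hJn
      have hJpos : (0:ℝ) < (J n:ℝ) := lt_of_lt_of_le (by positivity) hJn
      obtain ⟨hcomp, hja, hcb⟩ := hspec n hn
      set a := (hN₀ n hn).choose
      set b := (hN₀ n hn).choose_spec.choose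
      have ha0 : 0 ≤ a := hcomp.1
      have haJ : a ≤ τ n / (J n:ℝ) := by
        rw [le_div_iff₀ hJpos]
        calc a * (J n:ℝ) = (J n:ℝ) * a := mul_comm _ _
          _ ≤ τ n := hja
      have hτJ : τ n / (J n:ℝ) ≤ c' * τ n / 2 := by
        rw [div_le_div_iff₀ hJpos (by norm_num)]
        have h2c' : 2/c' * (c' * τ n) ≤ (J n:ℝ) * (c' * τ n) :=
          mul_le_mul_of_nonneg_right hJn (mul_pos hc'pos (hτpos n)).le
        have heq2 : 2/c' * (c' * τ n) = 2 * τ n := by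
          field_simp
        nlinarith [heq2, h2c', hτpos n]
      have hah : a ≤ h n := by
        refine le_trans haJ (le_trans hτJ ?_)
        have := hgeτ n hn
        nlinarith [hc'pos, hτpos n]
      have hfree2 : Set.Ioo a (h n) ∩ E = ∅ := by
        have hsub : Set.Ioo a (h n) ⊆ Set.Ioo a b := by
          apply Set.Ioo_subset_Ioo le_rfl
          rw [hval n hn]
          exact min_le_left _ _
        rw [Set.eq_empty_iff_forall_notMem]
        rintro e ⟨he1, he2⟩
        exact (Set.eq_empty_iff_forall_notMem.1 hcomp.2.2.1 e) ⟨hsub he1, he2⟩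
      have hlam : h n - a ≤ lambda0 E (h n) := le_lambda0 ha0 hah le_rfl hfree2
      rw [le_div_iff₀ (hpos n)]
      have hfrac : a ≤ (1/(c' * (J n:ℝ))) * h n := by
        have h1 : a ≤ τ n / (J n:ℝ) := haJ
        have h2 : h n ≤ τ n := hleτ n
        have h3 : c' * τ n ≤ h n := hgeτ n hn
        rw [div_mul_eq_mul_div, one_mul, le_div_iff₀ (by positivity : (0:ℝ) < c' * (J n:ℝ))]
        -- a * (c' * J n) ≤ h n : a*(c'*Jn) ≤ (τ/J)*(c'*J) = c'*τ ≤ h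
        calc a * (c' * (J n:ℝ)) ≤ (τ n / (J n:ℝ)) * (c' * (J n:ℝ)) := by
              apply mul_le_mul_of_nonneg_right haJ (by positivity)
          _ = c' * τ n := by field_simp
          _ ≤ h n := h3
      nlinarith [hlam, hfrac, hpos n]
    have htend : Filter.Tendsto (fun n => 1 - (1/(c' * (J n:ℝ)))) Filter.atTop (nhds 1) := by
      have h1 : Filter.Tendsto (fun n => c' * (J n:ℝ)) Filter.atTop Filter.atTop :=
        (tendsto_natCast_atTop_atTop.comp hJtop).const_mul_atTop hc'pos
      have h2 : Filter.Tendsto (fun n => (c' * (J n:ℝ))⁻¹) Filter.atTop (nhds 0) :=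
        h1.inv_tendsto_atTop
      have h3 := h2.const_sub 1
      rw [sub_zero] at h3
      simpa [one_div] using h3
    exact tendsto_of_tendsto_of_tendsto_of_le_of_le' htend tendsto_const_nhds
      hlow (Filter.Eventually.of_forall hup)
  · -- SeqEquiv h τ
    filter_upwards [Filter.eventually_ge_atTop N₀] with n hn
    constructor
    · rw [one_mul]; exact hleτ n
    · rw [div_mul_eq_mul_div, one_mul, le_div_iff₀ hc'pos]
      calc τ n * c' = c' * τ n := mul_comm _ _
        _ ≤ h n := hgeτ n hn

theorem stmt15 (E : Set ℝ) (hE : E ⊆ Set.Ici 0) (hpor : porosity E = 1) :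
    CSP E ↔ ∀ τ : ℕ → ℝ, memE0d E τ →
      ∃ h : ℕ → ℝ, (∀ n, 0 < h n) ∧ Filter.Tendsto h Filter.atTop (nhds 0) ∧
        Filter.Tendsto (fun n => lambda0 E (h n) / h n) Filter.atTop (nhds (porosity E)) ∧
        SeqEquiv h τ := by
  constructor
  · intro hcsp τ hτ
    exact B_to_h hE hpor hτ (forward_B hE hcsp hτ)
  · intro H τ hτ
    exact G_to_SP hE hτ (G_of_H hE hpor H hτ)
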